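/- For every β > 1, the β-transformation τ_β is topologically exact: for every nonempty open subset U of [0,1) there exists n ≥ 0 such that the image τ_βⁿ(U) equals [0,1). -/

import Mathlib

open Set MeasureTheory

noncomputable section

/-- The β-transformation `x ↦ βx mod 1` on `[0,1)`. -/
def betaMap (β : ℝ) (x : ℝ) : ℝ := Int.fract (β * x)

/-- `Int.fract` maps any interval of length at least 1 onto `[0,1)`. -/
lemma fract_image_long (c d : ℝ) (h : c + 1 ≤ d) :
    Set.Ico (0:ℝ) 1 ⊆ Int.fract '' Set.Ico c d := by
  rintro y ⟨hy0, hy1⟩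
  refine ⟨y + ⌈c - y⌉, ⟨?_, ?_⟩, ?_⟩
  · have := Int.le_ceil (c - y); linarith
  · have := Int.ceil_lt_add_one (c - y); linarith
  · rw [Int.fract_add_intCast, Int.fract_eq_self.mpr ⟨hy0, hy1⟩]

/-- `Int.fract` on an interval between consecutive integers is a shift. -/
lemma fract_image_shift (k : ℤ) (c d : ℝ) (hkc : (k:ℝ) ≤ c) (hd : d ≤ k + 1) :
    Set.Ico (c - k) (d - k) ⊆ Int.fract '' Set.Ico c d := by
  rintro y ⟨hy0, hy1⟩
  refine ⟨y + k, ⟨by linarith, by linarith⟩, ?_⟩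
  rw [Int.fract_add_intCast, Int.fract_eq_self.mpr ⟨by linarith, by linarith⟩]

lemma betaMap_image (β : ℝ) (hβ : 0 < β) (a b : ℝ) :
    betaMap β '' Set.Ico a b = Int.fract '' Set.Ico (β * a) (β * b) := by
  have : betaMap β '' Set.Ico a b = Int.fract '' ((fun x => β * x) '' Set.Ico a b) := by
    rw [Set.image_image]; rfl
  rw [this, Set.image_mul_left_Ico hβ]

lemma iterate_succ_image (f : ℝ → ℝ) (n : ℕ) (S : Set ℝ) :
    f^[n + 1] '' S = f^[n] '' (f '' S) := by
  rw [Function.iterate_succ, Set.image_comp]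

/-- Intervals `[0, ε)` eventually cover `[0,1)`. -/
lemma zero_interval (β : ℝ) (hβ : 1 < β) :
    ∀ m : ℕ, ∀ ε : ℝ, 0 < ε → 1 ≤ β ^ m * ε →
      ∃ n, 1 ≤ n ∧ Set.Ico (0:ℝ) 1 ⊆ (betaMap β)^[n] '' Set.Ico 0 ε := by
  have hβ0 : (0:ℝ) < β := by linarith
  intro m
  induction m with
  | zero =>
    intro ε hε h1
    simp only [pow_zero, one_mul] at h1
    refine ⟨1, le_refl _, ?_⟩
    rw [Function.iterate_one, betaMap_image β hβ0, mul_zero]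
    exact fract_image_long _ _ (by nlinarith)
  | succ m ih =>
    intro ε hε h1
    by_cases hc : 1 ≤ β * ε
    · refine ⟨1, le_refl _, ?_⟩
      rw [Function.iterate_one, betaMap_image β hβ0, mul_zero]
      exact fract_image_long _ _ (by linarith)
    · push_neg at hc
      have hsub : Set.Ico (0:ℝ) (β * ε) ⊆ betaMap β '' Set.Ico 0 ε := by
        rw [betaMap_image β hβ0, mul_zero]
        have := fract_image_shift 0 0 (β * ε) (by norm_num) (by push_cast; linarith)
        simpa using this
      obtain ⟨n, hn1, hn⟩ := ih (β * ε) (by positivity)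
        (by rw [show β ^ m * (β * ε) = β ^ (m + 1) * ε by ring]; exact h1)
      refine ⟨n + 1, by omega, ?_⟩
      rw [iterate_succ_image]
      exact hn.trans (Set.image_mono hsub)

/-- Main lemma: any nontrivial interval in `[0,1)` eventually covers `[0,1)`. -/
lemma main_lem (β : ℝ) (hβ : 1 < β) :
    ∀ N : ℕ, ∀ a b : ℝ, 0 ≤ a → b ≤ 1 → 1 < β ^ N * (b - a) →
      ∃ n, 1 ≤ n ∧ Set.Ico (0:ℝ) 1 ⊆ (betaMap β)^[n] '' Set.Ico a b := by
  have hβ0 : (0:ℝ) < β := by linarith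
  intro N
  induction N with
  | zero =>
    intro a b ha hb h1
    simp only [pow_zero, one_mul] at h1
    linarith
  | succ N ih =>
    intro a b ha hb h1
    have hab : a < b := by nlinarith [pow_pos hβ0 (N + 1), pow_nonneg hβ0.le (N+1)]
    by_cases hc : 1 ≤ β * (b - a)
    · refine ⟨1, le_refl _, ?_⟩
      rw [Function.iterate_one, betaMap_image β hβ0]
      exact fract_image_long _ _ (by nlinarith)
    · push_neg at hc
      set k : ℤ := ⌊β * a⌋ with hk
      have hka : (k:ℝ) ≤ β * a := Int.floor_le _
      have hka1 : β * a < k + 1 := Int.lt_floor_add_one _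
      by_cases hd : β * b ≤ (k:ℝ) + 1
      · -- no integer crossing: image is a shifted interval
        have hsub : Set.Ico (β * a - k) (β * b - k) ⊆ betaMap β '' Set.Ico a b := by
          rw [betaMap_image β hβ0]
          exact fract_image_shift k _ _ hka hd
        have h0 : 0 ≤ β * a - (k:ℝ) := by linarith
        have hb1 : β * b - (k:ℝ) ≤ 1 := by linarith
        obtain ⟨n, hn1, hn⟩ := ih (β * a - k) (β * b - k) h0 hb1
          (by rw [show (β * b - k) - (β * a - k) = β * (b - a) by ring]
              calc (1:ℝ) < β ^ (N+1) * (b - a) := h1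
                _ = β ^ N * (β * (b - a)) := by ring)
        refine ⟨n + 1, by omega, ?_⟩
        rw [iterate_succ_image]
        exact hn.trans (Set.image_mono hsub)
      · -- the integer k+1 lies in (βa, βb): image contains [0, βb - (k+1))
        push_neg at hd
        have hj0 : (0:ℝ) ≤ (k:ℝ) + 1 := by
          have h := Int.floor_nonneg.mpr (mul_nonneg hβ0.le ha)
          have : (0:ℝ) ≤ (k:ℝ) := by exact_mod_cast h
          linarith
        have hstep : Set.Ico (0:ℝ) (β * b - ((k:ℝ)+1)) ⊆ betaMap β '' Set.Ico a b := by
          have hle : a ≤ ((k:ℝ)+1)/β := by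
            rw [le_div_iff₀ hβ0]; nlinarith
          have hsub1 : Set.Ico (((k:ℝ)+1)/β) b ⊆ Set.Ico a b :=
            Set.Ico_subset_Ico hle le_rfl
          have himg : betaMap β '' Set.Ico (((k:ℝ)+1)/β) b ⊆ betaMap β '' Set.Ico a b :=
            Set.image_mono hsub1
          refine Set.Subset.trans ?_ himg
          rw [betaMap_image β hβ0, mul_div_cancel₀ _ (ne_of_gt hβ0)]
          have h2 := fract_image_shift (k + 1) ((k:ℝ)+1) (β * b)
            (by push_cast; exact le_rfl) (by push_cast; linarith)
          push_cast at h2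
          simpa using h2
        obtain ⟨M, hM⟩ := pow_unbounded_of_one_lt (1 / (β * b - ((k:ℝ)+1))) hβ
        obtain ⟨n, hn1, hn⟩ := zero_interval β hβ M (β * b - ((k:ℝ)+1)) (by linarith)
          (le_of_lt ((div_lt_iff₀ (by linarith)).mp hM))
        refine ⟨n + 1, by omega, ?_⟩
        rw [iterate_succ_image]
        exact hn.trans (Set.image_mono hstep)

/-- For every `β > 1`, the β-transformation is topologically exact on
`[0,1)`: every nonempty relatively open subset of `[0,1)` has some iterated image equal to
`[0,1)`. -/
theorem stmt13 (β : ℝ) (hβ : 1 < β) :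
    ∀ U : Set ℝ, IsOpen U → (U ∩ Set.Ico (0 : ℝ) 1).Nonempty →
      ∃ n : ℕ, (betaMap β)^[n] '' (U ∩ Set.Ico (0 : ℝ) 1) = Set.Ico (0 : ℝ) 1 := by
  intro U hU ⟨x, hxU, hx0, hx1⟩
  obtain ⟨ε, hε, hball⟩ := Metric.isOpen_iff.mp hU x hxU
  set b : ℝ := min (x + ε) 1 with hbdef
  have hxb : x < b := lt_min (by linarith) hx1
  have hb1 : b ≤ 1 := min_le_right _ _
  have hIco : Set.Ico x b ⊆ U ∩ Set.Ico 0 1 := by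
    rintro y ⟨hy1, hy2⟩
    refine ⟨hball ?_, by linarith, lt_of_lt_of_le hy2 hb1⟩
    rw [Real.ball_eq_Ioo]
    have : b ≤ x + ε := min_le_left _ _
    exact ⟨by linarith, by linarith⟩
  obtain ⟨M, hM⟩ := pow_unbounded_of_one_lt (1 / (b - x)) hβ
  obtain ⟨n, hn1, hn⟩ := main_lem β hβ M x b hx0 hb1
    ((div_lt_iff₀ (by linarith)).mp hM)
  refine ⟨n, Set.Subset.antisymm ?_ (hn.trans (Set.image_mono hIco))⟩
  obtain ⟨m, rfl⟩ := Nat.exists_eq_add_of_le hn1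
  rintro y ⟨z, _, rfl⟩
  rw [add_comm, Function.iterate_succ_apply']
  exact ⟨Int.fract_nonneg _, Int.fract_lt_one _⟩
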